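/- (Descent lemma, convex case.) Under the stated assumptions (L-smoothness, gradient-noise conditions, mixing matrix conditions, and convexity of each f_i), if the step-size satisfies γ < 1/(4L), then for every k = 1, 2, … the Gossip-PGA iterates satisfy E‖x̄^{(k)} − x*‖² ≤ E‖x̄^{(k−1)} − x*‖² − γ·(E f(x̄^{(k−1)}) − f(x*)) + (3·L·γ/(2n))·E‖X^{(k−1)} − X̄^{(k−1)}‖_F² + γ²·σ²/n. -/

import Mathlib

open MeasureTheory Finset
open scoped RealInnerProductSpace

set_option maxHeartbeats 1000000

section det
variable {F : Type*} [NormedAddCommGroup F] [InnerProductSpace ℝ F] [CompleteSpace F]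

lemma curve_deriv' {φ : F → ℝ} {G : F → F} (hdiff : ∀ z, HasGradientAt φ (G z) z)
    (z v : F) (t : ℝ) :
    HasDerivAt (fun s : ℝ => φ (z + s • v)) ⟪G (z + t • v), v⟫ t := by
  have hc : HasDerivAt (fun s : ℝ => z + s • v) v t := by
    simpa using ((hasDerivAt_id t).smul_const v).const_add z
  have := (hdiff (z + t • v)).hasFDerivAt.comp_hasDerivAt t hc
  simpa [InnerProductSpace.toDual_apply_apply, Function.comp_def] using this

lemma smooth_upper {φ : F → ℝ} {G : F → F} {L : ℝ} (hL : 0 ≤ L)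
    (hdiff : ∀ z, HasGradientAt φ (G z) z)
    (hlip : ∀ y z, ‖G y - G z‖ ≤ L * ‖y - z‖) (z y : F) :
    φ y ≤ φ z + ⟪G z, y - z⟫ + L / 2 * ‖y - z‖ ^ 2 := by
  set v := y - z with hv
  set h : ℝ → ℝ := fun t => φ (z + t • v) - t * ⟪G z, v⟫ - L / 2 * t ^ 2 * ‖v‖ ^ 2 with hh
  have hd : ∀ t : ℝ, HasDerivAt h (⟪G (z + t • v), v⟫ - ⟪G z, v⟫ - L / 2 * (2 * t) * ‖v‖ ^ 2) t := by
    intro t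
    have := ((curve_deriv' hdiff z v t).sub ((hasDerivAt_id t).mul_const ⟪G z, v⟫)).sub
      (((hasDerivAt_pow 2 t).const_mul (L / 2)).mul_const (‖v‖ ^ 2))
    refine HasDerivAt.congr_deriv this ?_
    push_cast
    ring
  have hanti : AntitoneOn h (Set.Icc 0 1) := by
    apply antitoneOn_of_deriv_nonpos (convex_Icc 0 1)
    · exact (Differentiable.continuous fun t => (hd t).differentiableAt).continuousOn
    · exact fun t _ => ((hd t).differentiableAt).differentiableWithinAt
    · intro t ht
      rw [interior_Icc] at ht
      rw [(hd t).deriv]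
      have h1 : ⟪G (z + t • v) - G z, v⟫ ≤ L * t * ‖v‖ ^ 2 := by
        calc ⟪G (z + t • v) - G z, v⟫ ≤ ‖G (z + t • v) - G z‖ * ‖v‖ := real_inner_le_norm _ _
        _ ≤ (L * ‖z + t • v - z‖) * ‖v‖ := by
            exact mul_le_mul_of_nonneg_right (hlip _ _) (norm_nonneg _)
        _ = L * t * ‖v‖ ^ 2 := by
            simp only [add_sub_cancel_left, norm_smul, Real.norm_eq_abs,
              abs_of_pos ht.1]
            ring
      rw [inner_sub_left] at h1
      nlinarith [h1]
  have h10 : h 1 ≤ h 0 := hanti (Set.mem_Icc.2 ⟨le_refl 0, zero_le_one⟩)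
    (Set.mem_Icc.2 ⟨zero_le_one, le_refl 1⟩) zero_le_one
  have e0 : h 0 = φ z := by simp [hh]
  have e1 : h 1 = φ y - ⟪G z, v⟫ - L / 2 * ‖v‖ ^ 2 := by
    simp [hh, hv]
  rw [e0, e1] at h10
  linarith


lemma convex_lower {φ : F → ℝ} {G : F → F} (hconv : ConvexOn ℝ Set.univ φ)
    (hdiff : ∀ z, HasGradientAt φ (G z) z) (z y : F) :
    φ z + ⟪G z, y - z⟫ ≤ φ y := by
  set v := y - z with hv
  set ψ : ℝ → ℝ := fun t => φ (z + t • v) with hψ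
  have hd0 : HasDerivAt ψ ⟪G z, v⟫ 0 := by
    have := curve_deriv' hdiff z v 0
    simpa using this
  have htend : Filter.Tendsto (slope ψ 0) (nhdsWithin 0 (Set.Ioi 0)) (nhds ⟪G z, v⟫) := by
    exact (hasDerivAt_iff_tendsto_slope.mp hd0).mono_left
      (nhdsWithin_mono 0 fun t ht => Set.mem_compl_singleton_iff.2 (ne_of_gt ht))
  have hbound : ∀ᶠ t in nhdsWithin 0 (Set.Ioi 0), slope ψ 0 t ≤ φ y - φ z := by
    filter_upwards [Ioc_mem_nhdsGT_of_mem (Set.mem_Ico.2 ⟨le_refl 0, zero_lt_one⟩)] with t ht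
    have ht0 : 0 < t := ht.1
    have hconvex : ψ t ≤ (1 - t) * φ z + t * φ y := by
      have h1 : z + t • v = (1 - t) • z + t • y := by
        rw [hv]; module
      have := hconv.2 (Set.mem_univ z) (Set.mem_univ y) (by linarith [ht.2] : (0:ℝ) ≤ 1 - t)
        ht0.le (by ring)
      simpa [hψ, h1, smul_eq_mul] using this
    rw [slope_def_field, sub_zero, div_le_iff₀ ht0]
    have hψ0 : ψ 0 = φ z := by simp [hψ]
    nlinarith [hconvex, hψ0]
  have := le_of_tendsto htend hbound
  linarith

lemma grad_sq_le {φ : F → ℝ} {G : F → F} {L : ℝ} (hL : 0 < L)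
    (hdiff : ∀ z, HasGradientAt φ (G z) z)
    (hlip : ∀ y z, ‖G y - G z‖ ≤ L * ‖y - z‖)
    {xstar : F} (hmin : ∀ z, φ xstar ≤ φ z) (y : F) :
    ‖G y‖ ^ 2 ≤ 2 * L * (φ y - φ xstar) := by
  have h := smooth_upper hL.le hdiff hlip y (y - L⁻¹ • G y)
  have h2 : ⟪G y, y - L⁻¹ • G y - y⟫ = -(L⁻¹ * ‖G y‖ ^ 2) := by
    simp [inner_smul_right, real_inner_self_eq_norm_sq]
  have h3 : ‖y - L⁻¹ • G y - y‖ ^ 2 = (L⁻¹)^2 * ‖G y‖ ^ 2 := by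
    have : y - L⁻¹ • G y - y = -(L⁻¹ • G y) := by abel
    rw [this, norm_neg, norm_smul, mul_pow, Real.norm_eq_abs, sq_abs]
  rw [h2, h3] at h
  have hmin' := hmin (y - L⁻¹ • G y)
  have e : L / 2 * (L⁻¹ ^ 2 * ‖G y‖ ^ 2) = L⁻¹ / 2 * ‖G y‖ ^ 2 := by
    field_simp
  have key : L⁻¹ / 2 * ‖G y‖ ^ 2 ≤ φ y - φ xstar := by linarith
  calc ‖G y‖ ^ 2 = 2 * L * (L⁻¹ / 2 * ‖G y‖ ^ 2) := by
        field_simp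
    _ ≤ 2 * L * (φ y - φ xstar) := by
        exact mul_le_mul_of_nonneg_left key (by positivity)

end det

section det2
variable {F : Type*} [NormedAddCommGroup F] [InnerProductSpace ℝ F] [CompleteSpace F]

lemma avg_hasGradient {n : ℕ} (f : Fin n → F → ℝ) (grad : Fin n → F → F)
    (hdiff : ∀ i z, HasGradientAt (f i) (grad i z) z) (c : ℝ) (z : F) :
    HasGradientAt (fun w => c * ∑ i, f i w) (c • ∑ i, grad i z) z := by
  rw [hasGradientAt_iff_hasFDerivAt]
  have h1 : HasFDerivAt (fun w => ∑ i, f i w)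
      (∑ i, InnerProductSpace.toDual ℝ F (grad i z)) z :=
    HasFDerivAt.fun_sum fun i _ => (hdiff i z).hasFDerivAt
  have h2 := h1.const_mul c
  refine h2.congr_fderiv ?_
  simp [_root_.map_smul, map_sum]

lemma key_bound {n : ℕ} (hn : 0 < n)
    (f : Fin n → F → ℝ) (grad : Fin n → F → F) {L γ : ℝ}
    (hL : 0 < L) (hγ0 : 0 < γ) (hγL : γ * L < 1/4)
    (hdiff : ∀ i z, HasGradientAt (f i) (grad i z) z)
    (hsmooth : ∀ i y z, ‖grad i y - grad i z‖ ≤ L * ‖y - z‖)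
    (hconv : ∀ i, ConvexOn ℝ Set.univ (f i))
    (xstar : F)
    (hmin : ∀ z, (n : ℝ)⁻¹ * ∑ i, f i xstar ≤ (n : ℝ)⁻¹ * ∑ i, f i z)
    (p : Fin n → F) :
    -(2*γ) * ⟪((n : ℝ)⁻¹ • ∑ i, p i) - xstar, (n : ℝ)⁻¹ • ∑ i, grad i (p i)⟫
      + γ^2 * ‖(n : ℝ)⁻¹ • ∑ i, grad i (p i)‖^2
    ≤ -γ * ((n : ℝ)⁻¹ * ∑ i, f i ((n : ℝ)⁻¹ • ∑ j, p j) - (n : ℝ)⁻¹ * ∑ i, f i xstar)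
      + 3 * L * γ / (2 * n) * ∑ i, ‖p i - (n : ℝ)⁻¹ • ∑ j, p j‖^2 := by
  have hN : (0:ℝ) < (n : ℝ) := Nat.cast_pos.2 hn
  set N : ℝ := (n : ℝ) with hNdef
  set y : F := N⁻¹ • ∑ i, p i with hy
  set D : F := N⁻¹ • ∑ i, grad i (p i) with hD
  set GFy : F := N⁻¹ • ∑ i, grad i y with hGFy
  set S : ℝ := ∑ i, ‖p i - y‖^2 with hSdef
  set u : ℝ := N⁻¹ * S with hu
  set t : ℝ := N⁻¹ * ∑ i, f i y - N⁻¹ * ∑ i, f i xstar with ht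
  have hS : 0 ≤ S := Finset.sum_nonneg fun i _ => sq_nonneg _
  have hu0 : 0 ≤ u := mul_nonneg (by positivity) hS
  have ht0 : 0 ≤ t := sub_nonneg.2 (hmin y)
  -- (i): lower bound on the inner product
  have hlow_i : ∀ i, f i y - f i xstar - L/2 * ‖p i - y‖^2 ≤ ⟪grad i (p i), y - xstar⟫ := by
    intro i
    have hA := smooth_upper hL.le (hdiff i) (hsmooth i) (p i) y
    have hB := convex_lower (hconv i) (hdiff i) (p i) xstar
    have hsplit : ⟪grad i (p i), y - xstar⟫
        = ⟪grad i (p i), y - p i⟫ + ⟪grad i (p i), p i - xstar⟫ := by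
      rw [← inner_add_right, sub_add_sub_cancel]
    have hnegrw : ⟪grad i (p i), xstar - p i⟫ = -⟪grad i (p i), p i - xstar⟫ := by
      rw [← inner_neg_right, neg_sub]
    have hnorm : ‖y - p i‖ = ‖p i - y‖ := norm_sub_rev _ _
    rw [hsplit]
    rw [hnegrw] at hB
    rw [hnorm] at hA
    linarith
  have hlow : t - L/2 * u ≤ ⟪y - xstar, D⟫ := by
    have h1 : ⟪y - xstar, D⟫ = N⁻¹ * ∑ i, ⟪grad i (p i), y - xstar⟫ := by
      rw [hD, real_inner_smul_right, inner_sum]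
      congr 1
      exact Finset.sum_congr rfl fun i _ => real_inner_comm _ _
    rw [h1]
    have h2 : (∑ i, f i y) - (∑ i, f i xstar) - L/2 * S ≤ ∑ i, ⟪grad i (p i), y - xstar⟫ := by
      have hsum := Finset.sum_le_sum (fun i (_ : i ∈ Finset.univ) => hlow_i i)
      have hL2 : ∑ i, (f i y - f i xstar - L/2 * ‖p i - y‖^2)
          = (∑ i, f i y) - (∑ i, f i xstar) - L/2 * S := by
        rw [hSdef, Finset.mul_sum, ← Finset.sum_sub_distrib, ← Finset.sum_sub_distrib]
      rw [hL2] at hsum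
      exact hsum
    have h3 := mul_le_mul_of_nonneg_left h2 (by positivity : (0:ℝ) ≤ N⁻¹)
    calc t - L/2 * u = N⁻¹ * ((∑ i, f i y) - (∑ i, f i xstar) - L/2 * S) := by
          rw [ht, hu]; ring
      _ ≤ N⁻¹ * ∑ i, ⟪grad i (p i), y - xstar⟫ := h3
  -- Lipschitz property of the averaged gradient
  have hcard : ((Finset.univ : Finset (Fin n)).card : ℝ) = N := by
    simp [hNdef]
  have hlipF : ∀ a b : F, ‖(N⁻¹ • ∑ i, grad i a) - N⁻¹ • ∑ i, grad i b‖ ≤ L * ‖a - b‖ := by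
    intro a b
    rw [← smul_sub, ← Finset.sum_sub_distrib, norm_smul, Real.norm_eq_abs,
      abs_of_pos (by positivity : (0:ℝ) < N⁻¹)]
    calc N⁻¹ * ‖∑ i, (grad i a - grad i b)‖ ≤ N⁻¹ * ∑ i : Fin n, (L * ‖a - b‖) := by
          refine mul_le_mul_of_nonneg_left ?_ (by positivity)
          exact (norm_sum_le _ _).trans (Finset.sum_le_sum fun i _ => hsmooth i a b)
      _ = L * ‖a - b‖ := by
          rw [Finset.sum_const, nsmul_eq_mul, hcard]
          field_simp
  -- (ii): gradient norm bound at y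
  have hGF : ‖GFy‖^2 ≤ 2*L*t := by
    have := grad_sq_le (φ := fun z => N⁻¹ * ∑ i, f i z)
      (G := fun z => N⁻¹ • ∑ i, grad i z) hL
      (fun z => avg_hasGradient f grad hdiff N⁻¹ z) hlipF hmin y
    simpa [hGFy, ht] using this
  -- (iii): deviation bound
  have hdev : ‖D - GFy‖^2 ≤ L^2 * u := by
    have h1 : ‖D - GFy‖ ≤ N⁻¹ * (L * ∑ i, ‖p i - y‖) := by
      rw [hD, hGFy, ← smul_sub, ← Finset.sum_sub_distrib, norm_smul, Real.norm_eq_abs,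
        abs_of_pos (by positivity : (0:ℝ) < N⁻¹)]
      refine mul_le_mul_of_nonneg_left ?_ (by positivity)
      calc ‖∑ i, (grad i (p i) - grad i y)‖ ≤ ∑ i, ‖grad i (p i) - grad i y‖ :=
            norm_sum_le _ _
        _ ≤ ∑ i, L * ‖p i - y‖ := Finset.sum_le_sum fun i _ => hsmooth i (p i) y
        _ = L * ∑ i, ‖p i - y‖ := by rw [Finset.mul_sum]
    have h2 : (∑ i, ‖p i - y‖)^2 ≤ N * S := by
      have := sq_sum_le_card_mul_sum_sq (s := (Finset.univ : Finset (Fin n)))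
        (f := fun i => ‖p i - y‖)
      rw [hcard] at this
      simpa [hSdef] using this
    have h3 : ‖D - GFy‖^2 ≤ (N⁻¹ * (L * ∑ i, ‖p i - y‖))^2 := by
      have hnn : (0:ℝ) ≤ ‖D - GFy‖ := norm_nonneg _
      nlinarith [h1]
    have hsum_nn : (0:ℝ) ≤ ∑ i, ‖p i - y‖ := Finset.sum_nonneg fun i _ => norm_nonneg _
    have hNN : N⁻¹ * N = 1 := inv_mul_cancel₀ hN.ne'
    calc ‖D - GFy‖^2 ≤ (N⁻¹ * (L * ∑ i, ‖p i - y‖))^2 := h3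
      _ = N⁻¹ * N⁻¹ * L^2 * (∑ i, ‖p i - y‖)^2 := by ring
      _ ≤ N⁻¹ * N⁻¹ * L^2 * (N * S) := by
          refine mul_le_mul_of_nonneg_left h2 (by positivity)
      _ = L^2 * u := by
          rw [hu]
          field_simp
  -- (iv): bound on ‖D‖²
  have hDbound : ‖D‖^2 ≤ 4*L*t + 2*L^2*u := by
    have htri : ‖D‖ ≤ ‖GFy‖ + ‖D - GFy‖ := by
      simpa using norm_add_le GFy (D - GFy)
    nlinarith [htri, hGF, hdev, norm_nonneg D, norm_nonneg GFy, norm_nonneg (D - GFy),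
      sq_nonneg (‖GFy‖ - ‖D - GFy‖)]
  -- (v): combine
  have hrhs : 3 * L * γ / (2 * N) * S = 3/2 * L * γ * u := by
    rw [hu]; field_simp
  rw [hrhs]
  have hA2 : 2*γ*(t - L/2 * u) ≤ 2*γ*⟪y - xstar, D⟫ :=
    mul_le_mul_of_nonneg_left hlow (by positivity)
  have hB2 : γ^2*‖D‖^2 ≤ γ^2*(4*L*t + 2*L^2*u) :=
    mul_le_mul_of_nonneg_left hDbound (sq_nonneg γ)
  have aux1 : 0 ≤ γ * (1 - 4*(γ*L)) * t :=
    mul_nonneg (mul_nonneg hγ0.le (by linarith)) ht0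
  have aux2 : 0 ≤ (γ*L) * (1 - 4*(γ*L)) * u :=
    mul_nonneg (mul_nonneg (by positivity) (by linarith)) hu0
  clear_value N y D GFy S u t
  linarith [hA2, hB2, aux1, aux2]

end det2
lemma expand_sq {F : Type*} [NormedAddCommGroup F] [InnerProductSpace ℝ F]
    (a D s : F) (γ : ℝ) :
    ‖a - γ • D - γ • s‖ ^ 2
    = ‖a‖ ^ 2 + (-(2*γ) * ⟪a, D⟫ + γ ^ 2 * ‖D‖ ^ 2)
      + (-(2*γ)) * ⟪a - γ • D, s⟫ + γ ^ 2 * ‖s‖ ^ 2 := by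
  rw [norm_sub_sq_real (a - γ • D) (γ • s), norm_sub_sq_real a (γ • D),
    real_inner_smul_right, real_inner_smul_right, norm_smul, norm_smul]
  simp only [Real.norm_eq_abs, mul_pow, sq_abs]
  ring

section prob
variable {Ω : Type*} {mΩ : MeasurableSpace Ω} {μ : Measure Ω}

lemma integrable_inner_of_memL2 {F : Type*} [NormedAddCommGroup F] [InnerProductSpace ℝ F]
    {f g : Ω → F} (hf : MemLp f 2 μ) (hg : MemLp g 2 μ) :
    Integrable (fun ω => ⟪f ω, g ω⟫) μ := by
  have h := L2.integrable_inner (𝕜 := ℝ) (hf.toLp f) (hg.toLp g)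
  refine h.congr ?_
  filter_upwards [hf.coeFn_toLp, hg.coeFn_toLp] with ω h1 h2
  rw [h1, h2]

lemma integrable_mul_of_memL2 {f g : Ω → ℝ} (hf : MemLp f 2 μ) (hg : MemLp g 2 μ) :
    Integrable (fun ω => f ω * g ω) μ := by
  have := integrable_inner_of_memL2 hf hg
  simpa [RCLike.inner_apply, conj_trivial, mul_comm] using this

lemma memLp_component {d : ℕ} {ξ : Ω → EuclideanSpace ℝ (Fin d)} (hξ : MemLp ξ 2 μ)
    (t : Fin d) : MemLp (fun ω => ξ ω t) 2 μ :=
  (EuclideanSpace.proj t : EuclideanSpace ℝ (Fin d) →L[ℝ] ℝ).comp_memLp' hξ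

lemma integrable_component {d : ℕ} {ξ : Ω → EuclideanSpace ℝ (Fin d)} (hξ : Integrable ξ μ)
    (t : Fin d) : Integrable (fun ω => ξ ω t) μ :=
  (EuclideanSpace.proj t : EuclideanSpace ℝ (Fin d) →L[ℝ] ℝ).integrable_comp hξ

lemma setIntegral_component {d : ℕ} {ξ : Ω → EuclideanSpace ℝ (Fin d)} (hξ : Integrable ξ μ)
    (s : Set Ω) (t : Fin d) :
    ∫ ω in s, ξ ω t ∂μ = (EuclideanSpace.proj t : EuclideanSpace ℝ (Fin d) →L[ℝ] ℝ)
      (∫ ω in s, ξ ω ∂μ) := by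
  have h := ((EuclideanSpace.proj t : EuclideanSpace ℝ (Fin d) →L[ℝ] ℝ).integral_comp_comm
      (μ := μ.restrict s) hξ.integrableOn).symm
  simpa using h.symm

lemma integrableOn_zero' [IsFiniteMeasure μ] (s : Set Ω) : IntegrableOn (0 : Ω → ℝ) s μ :=
  integrable_const (0:ℝ) (μ := μ.restrict s)

variable [IsProbabilityMeasure μ] {m : MeasurableSpace Ω} (hm : m ≤ mΩ)

include hm in
lemma condexp_component_zero {d : ℕ} {ξ : Ω → EuclideanSpace ℝ (Fin d)}
    (hξ : Integrable ξ μ) (h0 : μ[ξ|m] =ᵐ[μ] 0) (t : Fin d) :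
    μ[fun ω => ξ ω t|m] =ᵐ[μ] 0 := by
  haveI : SigmaFinite (μ.trim hm) := by
    exact sigmaFiniteTrim_mono hm le_rfl
  symm
  refine ae_eq_condExp_of_forall_setIntegral_eq hm (integrable_component hξ t)
    (fun s _ _ => integrableOn_zero' s)
    (fun s hs hμs => ?_) stronglyMeasurable_zero.aestronglyMeasurable
  have h1 := setIntegral_component hξ s t
  have h2 : ∫ ω in s, ξ ω ∂μ = 0 := by
    rw [← setIntegral_condExp hm hξ hs]
    calc ∫ ω in s, (μ[ξ|m]) ω ∂μ = ∫ ω in s, (0:EuclideanSpace ℝ (Fin d)) ∂μ :=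
          integral_congr_ae (ae_restrict_of_ae h0)
      _ = 0 := by simp
  rw [h1, h2]
  simp

include hm in
lemma integral_inner_eq_zero {d : ℕ} {ξ Y : Ω → EuclideanSpace ℝ (Fin d)}
    (hξ : MemLp ξ 2 μ) (hY : MemLp Y 2 μ)
    (hYm : StronglyMeasurable[m] Y) (h0 : μ[ξ|m] =ᵐ[μ] 0) :
    ∫ ω, ⟪Y ω, ξ ω⟫ ∂μ = 0 := by
  haveI : SigmaFinite (μ.trim hm) := sigmaFiniteTrim_mono hm le_rfl
  have hrw : (fun ω => ⟪Y ω, ξ ω⟫) = fun ω => ∑ t, Y ω t * ξ ω t := by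
    funext ω
    simp [PiLp.inner_apply, RCLike.inner_apply, conj_trivial, mul_comm]
  rw [hrw, integral_finset_sum]
  · refine Finset.sum_eq_zero fun t _ => ?_
    have hYt : MemLp (fun ω => Y ω t) 2 μ := memLp_component hY t
    have hξt : MemLp (fun ω => ξ ω t) 2 μ := memLp_component hξ t
    have hint : Integrable (fun ω => Y ω t * ξ ω t) μ := integrable_mul_of_memL2 hYt hξt
    have hξint : Integrable (fun ω => ξ ω t) μ := hξt.integrable one_le_two
    have hYtm : StronglyMeasurable[m] (fun ω => Y ω t) :=
      ((EuclideanSpace.proj t : EuclideanSpace ℝ (Fin d) →L[ℝ] ℝ).continuous).comp_stronglyMeasurable hYm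
    have hcz := condexp_component_zero hm (hξ.integrable one_le_two) h0 t
    have hpull : μ[(fun ω => Y ω t) * (fun ω => ξ ω t)|m]
        =ᵐ[μ] (fun ω => Y ω t) * μ[fun ω => ξ ω t|m] :=
      condExp_mul_of_stronglyMeasurable_left hYtm hint hξint
    have hstep : ∫ ω, Y ω t * ξ ω t ∂μ
        = ∫ ω, ((fun ω => Y ω t) * μ[fun ω => ξ ω t|m]) ω ∂μ := by
      calc ∫ ω, Y ω t * ξ ω t ∂μ
          = ∫ ω, (μ[(fun ω => Y ω t) * (fun ω => ξ ω t)|m]) ω ∂μ := by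
            exact (integral_condExp hm).symm
        _ = ∫ ω, ((fun ω => Y ω t) * μ[fun ω => ξ ω t|m]) ω ∂μ := integral_congr_ae hpull
    rw [hstep]
    calc ∫ ω, ((fun ω => Y ω t) * μ[fun ω => ξ ω t|m]) ω ∂μ
        = ∫ ω, (Y ω t * 0) ∂μ := by
          refine integral_congr_ae ?_
          filter_upwards [hcz] with ω h
          simp [h]
      _ = 0 := by simp
  · intro t _
    exact integrable_mul_of_memL2 (memLp_component hY t) (memLp_component hξ t)

end prob


/-- **Descent lemma for Gossip-PGA, convex case.**
Under `L`-smoothness, convexity of each `fᵢ`, the gradient-noise assumptions and the mixing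
matrix assumptions, if the step-size satisfies `γ < 1/(4L)`, then for every `k` the
Gossip-PGA iterates satisfy
`E‖x̄⁽ᵏ⁺¹⁾ − x*‖² ≤ E‖x̄⁽ᵏ⁾ − x*‖² − γ (E f(x̄⁽ᵏ⁾) − f(x*))
   + (3Lγ/(2n)) E‖X⁽ᵏ⁾ − X̄⁽ᵏ⁾‖_F² + γ²σ²/n`. -/
theorem gossip_pga_descent_lemma_convex
    {Ω : Type*} [mΩ : MeasurableSpace Ω] (μ : Measure Ω) [IsProbabilityMeasure μ]
    (d n : ℕ) (hn : 0 < n)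
    (f : Fin n → EuclideanSpace ℝ (Fin d) → ℝ)
    (grad : Fin n → EuclideanSpace ℝ (Fin d) → EuclideanSpace ℝ (Fin d))
    (L σ β γ : ℝ) (H : ℕ)
    (hL : 0 < L) (hσ : 0 ≤ σ) (hβ0 : 0 < β) (hβ1 : β < 1) (hγ0 : 0 < γ) (hH : 0 < H)
    -- smoothness and convexity
    (hdiff : ∀ i z, HasGradientAt (f i) (grad i z) z)
    (hsmooth : ∀ i y z, ‖grad i y - grad i z‖ ≤ L * ‖y - z‖)
    (hconv : ∀ i, ConvexOn ℝ Set.univ (f i))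
    (xstar : EuclideanSpace ℝ (Fin d))
    (hmin : ∀ z, (n : ℝ)⁻¹ * ∑ i, f i xstar ≤ (n : ℝ)⁻¹ * ∑ i, f i z)
    -- mixing matrix assumptions
    (W : Matrix (Fin n) (Fin n) ℝ)
    (hWpos : ∀ i j, 0 ≤ W i j)
    (hWrow : ∀ i, ∑ j, W i j = 1)
    (hWcol : ∀ j, ∑ i, W i j = 1)
    (hWnull : ∀ v : Fin n → ℝ, (1 - W).mulVec v = 0 → ∃ c : ℝ, v = fun _ => c)
    (hWnorm : ∀ v : Fin n → ℝ,
      Real.sqrt (∑ i, (W.mulVec v i - (∑ j, v j) / n) ^ 2) ≤ β * Real.sqrt (∑ i, v i ^ 2))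
    -- the stochastic process: iterates and stochastic gradients, with their filtration
    (ℱ : ℕ → MeasurableSpace Ω) (hℱle : ∀ k, ℱ k ≤ mΩ) (hℱmono : Monotone ℱ)
    (x g : ℕ → Fin n → Ω → EuclideanSpace ℝ (Fin d))
    (hx_adapted : ∀ k i, StronglyMeasurable[ℱ k] (x k i))
    (hg_adapted : ∀ k i, StronglyMeasurable[ℱ (k + 1)] (g k i))
    (hx_L2 : ∀ k i, MemLp (x k i) 2 μ)
    (hg_L2 : ∀ k i, MemLp (g k i) 2 μ)
    -- all initial values coincide
    (hx0 : ∀ i j ω, x 0 i ω = x 0 j ω)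
    -- gradient-noise assumptions
    (hmean : ∀ k i, μ[fun ω => g k i ω - grad i (x k i ω) | ℱ k] =ᵐ[μ] 0)
    (hvar : ∀ k i, ∀ᵐ ω ∂μ,
      (μ[fun ω => ‖g k i ω - grad i (x k i ω)‖ ^ 2 | ℱ k]) ω ≤ σ ^ 2)
    (hindep : ∀ k, ∀ i j, i ≠ j →
      μ[fun ω => ⟪g k i ω - grad i (x k i ω), g k j ω - grad j (x k j ω)⟫ | ℱ k]
        =ᵐ[μ] 0)
    -- the Gossip-PGA recursion with averaging period `H`
    (hrec_gossip : ∀ k i ω, (k + 1) % H ≠ 0 →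
      x (k + 1) i ω = ∑ j, W i j • (x k j ω - γ • g k j ω))
    (hrec_avg : ∀ k i ω, (k + 1) % H = 0 →
      x (k + 1) i ω = (n : ℝ)⁻¹ • ∑ j, (x k j ω - γ • g k j ω))
    -- integrability of the function values
    (hfint : ∀ k, Integrable
      (fun ω => (n : ℝ)⁻¹ * ∑ i, f i ((n : ℝ)⁻¹ • ∑ j, x k j ω)) μ)
    -- step-size condition
    (hγ : γ < 1 / (4 * L)) :
    ∀ k : ℕ,
      (∫ ω, ‖(n : ℝ)⁻¹ • (∑ i, x (k + 1) i ω) - xstar‖ ^ 2 ∂μ) ≤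
        (∫ ω, ‖(n : ℝ)⁻¹ • (∑ i, x k i ω) - xstar‖ ^ 2 ∂μ)
        - γ * ((∫ ω, (n : ℝ)⁻¹ * ∑ i, f i ((n : ℝ)⁻¹ • ∑ j, x k j ω) ∂μ)
            - (n : ℝ)⁻¹ * ∑ i, f i xstar)
        + 3 * L * γ / (2 * n)
            * (∫ ω, (∑ i, ‖x k i ω - (n : ℝ)⁻¹ • ∑ j, x k j ω‖ ^ 2) ∂μ)
        + γ ^ 2 * σ ^ 2 / n := by
  intro k
  have hm : ℱ k ≤ mΩ := hℱle k
  haveI : SigmaFinite (μ.trim hm) := sigmaFiniteTrim_mono hm le_rfl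
  have hN : (0:ℝ) < (n : ℝ) := Nat.cast_pos.2 hn
  have hγL : γ * L < 1/4 := by
    rw [lt_div_iff₀ (by positivity : (0:ℝ) < 4 * L)] at hγ
    linarith
  -- abbreviations (as plain functions)
  set xb : Ω → EuclideanSpace ℝ (Fin d) := fun ω => (n : ℝ)⁻¹ • (∑ i, x k i ω) with hxb
  set Dv : Ω → EuclideanSpace ℝ (Fin d) :=
    fun ω => (n : ℝ)⁻¹ • ∑ i, grad i (x k i ω) with hDv
  set ξf : Fin n → Ω → EuclideanSpace ℝ (Fin d) :=
    fun i ω => g k i ω - grad i (x k i ω) with hξf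
  set ξb : Ω → EuclideanSpace ℝ (Fin d) := fun ω => (n : ℝ)⁻¹ • ∑ i, ξf i ω with hξb
  set Av : Ω → EuclideanSpace ℝ (Fin d) := fun ω => xb ω - xstar with hAv
  set Yv : Ω → EuclideanSpace ℝ (Fin d) := fun ω => Av ω - γ • Dv ω with hYv
  -- step 1: evolution of the average
  have hblock : ∀ ω, (n : ℝ)⁻¹ • (∑ i, x (k + 1) i ω) - xstar
      = (Av ω - γ • Dv ω) - γ • ξb ω := by
    intro ω
    have hsum : ∑ i, x (k + 1) i ω = ∑ j, (x k j ω - γ • g k j ω) := by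
      by_cases hcase : (k + 1) % H = 0
      · rw [Finset.sum_congr rfl fun i _ => hrec_avg k i ω hcase]
        rw [Finset.sum_const, Finset.card_univ, Fintype.card_fin,
          ← Nat.cast_smul_eq_nsmul ℝ, smul_smul, mul_inv_cancel₀ hN.ne', one_smul]
      · rw [Finset.sum_congr rfl fun i _ => hrec_gossip k i ω hcase]
        rw [Finset.sum_comm]
        refine Finset.sum_congr rfl fun j _ => ?_
        rw [← Finset.sum_smul, hWcol j, one_smul]
    have hgsplit : (n : ℝ)⁻¹ • (∑ i, g k i ω) = Dv ω + ξb ω := by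
      show (n : ℝ)⁻¹ • (∑ i, g k i ω)
        = (n : ℝ)⁻¹ • (∑ i, grad i (x k i ω))
          + (n : ℝ)⁻¹ • ∑ i, (g k i ω - grad i (x k i ω))
      rw [← smul_add, ← Finset.sum_add_distrib]
      congr 1
      refine Finset.sum_congr rfl fun i _ => ?_
      abel
    have h1 : ∑ j, (x k j ω - γ • g k j ω) = (∑ j, x k j ω) - γ • ∑ j, g k j ω := by
      rw [Finset.sum_sub_distrib, Finset.smul_sum]
    have h2 : (n : ℝ)⁻¹ • ((∑ j, x k j ω) - γ • ∑ j, g k j ω)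
        = (n : ℝ)⁻¹ • (∑ j, x k j ω) - γ • ((n : ℝ)⁻¹ • ∑ j, g k j ω) := by
      rw [smul_sub, smul_comm]
    rw [hsum, h1, h2, hgsplit]
    show (n : ℝ)⁻¹ • (∑ j, x k j ω) - γ • (Dv ω + ξb ω) - xstar
        = (((n : ℝ)⁻¹ • (∑ i, x k i ω) - xstar) - γ • Dv ω) - γ • ξb ω
    rw [smul_add]
    abel
  -- step 2: pointwise expansion of the squared distance
  have hpoint : ∀ ω, ‖(n : ℝ)⁻¹ • (∑ i, x (k + 1) i ω) - xstar‖ ^ 2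
      = ‖Av ω‖ ^ 2 + (-(2*γ) * ⟪Av ω, Dv ω⟫ + γ ^ 2 * ‖Dv ω‖ ^ 2)
        + (-(2*γ)) * ⟪Yv ω, ξb ω⟫ + γ ^ 2 * ‖ξb ω‖ ^ 2 := by
    intro ω
    rw [hblock ω]
    exact expand_sq (Av ω) (Dv ω) (ξb ω) γ
  -- L² and measurability facts
  have hxbL2 : MemLp xb 2 μ := by
    have := (memLp_finset_sum (Finset.univ : Finset (Fin n))
      (fun i _ => hx_L2 k i)).const_smul ((n:ℝ)⁻¹)
    exact this
  have hAvL2 : MemLp Av 2 μ := hxbL2.sub (memLp_const xstar)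
  have hgradL2 : ∀ i, MemLp (fun ω => grad i (x k i ω)) 2 μ := by
    intro i
    have hlip : LipschitzWith (Real.toNNReal L) (fun z => grad i z - grad i 0) := by
      apply LipschitzWith.of_dist_le_mul
      intro a b
      simp only [dist_eq_norm]
      have he : (grad i a - grad i 0) - (grad i b - grad i 0) = grad i a - grad i b := by abel
      rw [he, Real.coe_toNNReal _ hL.le]
      exact hsmooth i a b
    have h1 : MemLp (fun ω => grad i (x k i ω) - grad i 0) 2 μ := by
      exact hlip.comp_memLp (by simp) (hx_L2 k i)
    refine (h1.add (memLp_const (grad i 0))).ae_eq ?_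
    filter_upwards with ω
    show (grad i (x k i ω) - grad i 0) + grad i 0 = grad i (x k i ω)
    abel
  have hDvL2 : MemLp Dv 2 μ := by
    have := (memLp_finset_sum (Finset.univ : Finset (Fin n))
      (fun i _ => hgradL2 i)).const_smul ((n:ℝ)⁻¹)
    exact this
  have hξfL2 : ∀ i, MemLp (ξf i) 2 μ := fun i => (hg_L2 k i).sub (hgradL2 i)
  have hξbL2 : MemLp ξb 2 μ := by
    have := (memLp_finset_sum (Finset.univ : Finset (Fin n))
      (fun i _ => hξfL2 i)).const_smul ((n:ℝ)⁻¹)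
    exact this
  have hYvL2 : MemLp Yv 2 μ := hAvL2.sub (hDvL2.const_smul γ)
  have hxbM : StronglyMeasurable[ℱ k] xb :=
    (Finset.stronglyMeasurable_fun_sum Finset.univ (fun i _ => hx_adapted k i)).const_smul ((n:ℝ)⁻¹)
  have hgradM : ∀ i, StronglyMeasurable[ℱ k] (fun ω => grad i (x k i ω)) := by
    intro i
    have hlip : LipschitzWith (Real.toNNReal L) (grad i) := by
      apply LipschitzWith.of_dist_le_mul
      intro a b
      simp only [dist_eq_norm]
      rw [Real.coe_toNNReal _ hL.le]
      exact hsmooth i a b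
    exact hlip.continuous.comp_stronglyMeasurable (hx_adapted k i)
  have hDvM : StronglyMeasurable[ℱ k] Dv :=
    (Finset.stronglyMeasurable_fun_sum Finset.univ (fun i _ => hgradM i)).const_smul ((n:ℝ)⁻¹)
  have hYvM : StronglyMeasurable[ℱ k] Yv :=
    ((hxbM.sub stronglyMeasurable_const).sub (hDvM.const_smul γ))
  -- integrability of all terms
  have hInt1 : Integrable (fun ω => ‖Av ω‖ ^ 2) μ :=
    (memLp_two_iff_integrable_sq_norm hAvL2.aestronglyMeasurable).mp hAvL2
  have hIntAD : Integrable (fun ω => ⟪Av ω, Dv ω⟫) μ := integrable_inner_of_memL2 hAvL2 hDvL2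
  have hIntD2 : Integrable (fun ω => ‖Dv ω‖ ^ 2) μ :=
    (memLp_two_iff_integrable_sq_norm hDvL2.aestronglyMeasurable).mp hDvL2
  have hIntmid : Integrable (fun ω => -(2*γ) * ⟪Av ω, Dv ω⟫ + γ ^ 2 * ‖Dv ω‖ ^ 2) μ :=
    (hIntAD.const_mul (-(2*γ))).add (hIntD2.const_mul (γ^2))
  have hIntYξ : Integrable (fun ω => ⟪Yv ω, ξb ω⟫) μ := integrable_inner_of_memL2 hYvL2 hξbL2
  have hIntξ2 : Integrable (fun ω => ‖ξb ω‖ ^ 2) μ :=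
    (memLp_two_iff_integrable_sq_norm hξbL2.aestronglyMeasurable).mp hξbL2
  -- split the integral
  have hsplit : (∫ ω, ‖(n : ℝ)⁻¹ • (∑ i, x (k + 1) i ω) - xstar‖ ^ 2 ∂μ)
      = (∫ ω, ‖Av ω‖ ^ 2 ∂μ)
        + (∫ ω, (-(2*γ) * ⟪Av ω, Dv ω⟫ + γ ^ 2 * ‖Dv ω‖ ^ 2) ∂μ)
        + (∫ ω, (-(2*γ)) * ⟪Yv ω, ξb ω⟫ ∂μ)
        + γ ^ 2 * (∫ ω, ‖ξb ω‖ ^ 2 ∂μ) := by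
    calc (∫ ω, ‖(n : ℝ)⁻¹ • (∑ i, x (k + 1) i ω) - xstar‖ ^ 2 ∂μ)
        = ∫ ω, (‖Av ω‖ ^ 2 + (-(2*γ) * ⟪Av ω, Dv ω⟫ + γ ^ 2 * ‖Dv ω‖ ^ 2)
            + (-(2*γ)) * ⟪Yv ω, ξb ω⟫ + γ ^ 2 * ‖ξb ω‖ ^ 2) ∂μ :=
          integral_congr_ae (Filter.Eventually.of_forall hpoint)
      _ = (∫ ω, (‖Av ω‖ ^ 2 + (-(2*γ) * ⟪Av ω, Dv ω⟫ + γ ^ 2 * ‖Dv ω‖ ^ 2)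
            + (-(2*γ)) * ⟪Yv ω, ξb ω⟫) ∂μ) + ∫ ω, γ ^ 2 * ‖ξb ω‖ ^ 2 ∂μ := by
          exact integral_add ((hInt1.add hIntmid).add (hIntYξ.const_mul (-(2*γ))))
            (hIntξ2.const_mul (γ^2))
      _ = ((∫ ω, (‖Av ω‖ ^ 2 + (-(2*γ) * ⟪Av ω, Dv ω⟫ + γ ^ 2 * ‖Dv ω‖ ^ 2)) ∂μ)
            + ∫ ω, (-(2*γ)) * ⟪Yv ω, ξb ω⟫ ∂μ) + ∫ ω, γ ^ 2 * ‖ξb ω‖ ^ 2 ∂μ := by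
          have h := integral_add (hInt1.add hIntmid) (hIntYξ.const_mul (-(2*γ)))
          rw [show (∫ ω, (‖Av ω‖ ^ 2 + (-(2*γ) * ⟪Av ω, Dv ω⟫ + γ ^ 2 * ‖Dv ω‖ ^ 2)
            + (-(2*γ)) * ⟪Yv ω, ξb ω⟫) ∂μ)
            = (∫ ω, (‖Av ω‖ ^ 2 + (-(2*γ) * ⟪Av ω, Dv ω⟫ + γ ^ 2 * ‖Dv ω‖ ^ 2)) ∂μ)
              + ∫ ω, (-(2*γ)) * ⟪Yv ω, ξb ω⟫ ∂μ from h]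
      _ = (((∫ ω, ‖Av ω‖ ^ 2 ∂μ)
            + ∫ ω, (-(2*γ) * ⟪Av ω, Dv ω⟫ + γ ^ 2 * ‖Dv ω‖ ^ 2) ∂μ)
            + ∫ ω, (-(2*γ)) * ⟪Yv ω, ξb ω⟫ ∂μ) + ∫ ω, γ ^ 2 * ‖ξb ω‖ ^ 2 ∂μ := by
          have h := integral_add hInt1 hIntmid
          rw [show (∫ ω, (‖Av ω‖ ^ 2 + (-(2*γ) * ⟪Av ω, Dv ω⟫ + γ ^ 2 * ‖Dv ω‖ ^ 2)) ∂μ)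
            = (∫ ω, ‖Av ω‖ ^ 2 ∂μ)
              + ∫ ω, (-(2*γ) * ⟪Av ω, Dv ω⟫ + γ ^ 2 * ‖Dv ω‖ ^ 2) ∂μ from h]
      _ = _ := by
          rw [show (∫ ω, γ ^ 2 * ‖ξb ω‖ ^ 2 ∂μ) = γ ^ 2 * ∫ ω, ‖ξb ω‖ ^ 2 ∂μ from
            integral_const_mul _ _]
  -- the cross term vanishes
  have hcross0 : (∫ ω, ⟪Yv ω, ξb ω⟫ ∂μ) = 0 := by
    have hrw : ∀ ω, ⟪Yv ω, ξb ω⟫ = (n : ℝ)⁻¹ * ∑ i, ⟪Yv ω, ξf i ω⟫ := by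
      intro ω
      rw [hξb]
      rw [real_inner_smul_right, inner_sum]
    calc (∫ ω, ⟪Yv ω, ξb ω⟫ ∂μ)
        = ∫ ω, (n : ℝ)⁻¹ * ∑ i, ⟪Yv ω, ξf i ω⟫ ∂μ :=
          integral_congr_ae (Filter.Eventually.of_forall hrw)
      _ = (n : ℝ)⁻¹ * ∫ ω, ∑ i, ⟪Yv ω, ξf i ω⟫ ∂μ := by
          exact integral_const_mul _ _
      _ = (n : ℝ)⁻¹ * ∑ i, ∫ ω, ⟪Yv ω, ξf i ω⟫ ∂μ := by
          rw [integral_finset_sum _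
            (fun i _ => integrable_inner_of_memL2 hYvL2 (hξfL2 i))]
      _ = 0 := by
          rw [Finset.sum_eq_zero, mul_zero]
          intro i _
          exact integral_inner_eq_zero hm (hξfL2 i) hYvL2 hYvM (hmean k i)
  -- the noise term
  have hnoise : (∫ ω, ‖ξb ω‖ ^ 2 ∂μ) ≤ σ ^ 2 / n := by
    have hrw : ∀ ω, ‖ξb ω‖ ^ 2 = (n : ℝ)⁻¹ * ((n : ℝ)⁻¹ * ∑ i, ∑ j, ⟪ξf i ω, ξf j ω⟫) := by
      intro ω
      rw [← real_inner_self_eq_norm_sq, hξb, real_inner_smul_left, real_inner_smul_right,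
        sum_inner]
      congr 2
      refine Finset.sum_congr rfl fun i _ => ?_
      rw [inner_sum]
    have hij : ∀ i j, i ≠ j → (∫ ω, ⟪ξf i ω, ξf j ω⟫ ∂μ) = 0 := by
      intro i j hne
      calc (∫ ω, ⟪ξf i ω, ξf j ω⟫ ∂μ)
          = ∫ ω, (μ[fun ω => ⟪ξf i ω, ξf j ω⟫|ℱ k]) ω ∂μ := (integral_condExp hm).symm
        _ = ∫ ω, (0 : ℝ) ∂μ := integral_congr_ae (hindep k i j hne)
        _ = 0 := integral_zero _ _
    have hii : ∀ i : Fin n, (∫ ω, ⟪ξf i ω, ξf i ω⟫ ∂μ) ≤ σ ^ 2 := by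
      intro i
      have hre : ∀ ω, ⟪ξf i ω, ξf i ω⟫ = ‖ξf i ω‖ ^ 2 := fun ω =>
        real_inner_self_eq_norm_sq _
      calc (∫ ω, ⟪ξf i ω, ξf i ω⟫ ∂μ)
          = ∫ ω, ‖ξf i ω‖ ^ 2 ∂μ := integral_congr_ae (Filter.Eventually.of_forall hre)
        _ = ∫ ω, (μ[fun ω => ‖ξf i ω‖ ^ 2|ℱ k]) ω ∂μ := (integral_condExp hm).symm
        _ ≤ ∫ ω, σ ^ 2 ∂μ :=
            integral_mono_ae integrable_condExp (integrable_const _) (hvar k i)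
        _ = σ ^ 2 := by simp
    have hdiag : ∀ i : Fin n, (∑ j, ∫ ω, ⟪ξf i ω, ξf j ω⟫ ∂μ) = ∫ ω, ⟪ξf i ω, ξf i ω⟫ ∂μ := by
      intro i
      refine Finset.sum_eq_single i (fun j _ hj => hij i j (fun h => hj h.symm))
        (fun h => absurd (Finset.mem_univ i) h)
    calc (∫ ω, ‖ξb ω‖ ^ 2 ∂μ)
        = ∫ ω, (n : ℝ)⁻¹ * ((n : ℝ)⁻¹ * ∑ i, ∑ j, ⟪ξf i ω, ξf j ω⟫) ∂μ :=
          integral_congr_ae (Filter.Eventually.of_forall hrw)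
      _ = (n : ℝ)⁻¹ * ∫ ω, ((n : ℝ)⁻¹ * ∑ i, ∑ j, ⟪ξf i ω, ξf j ω⟫) ∂μ := by
          exact integral_const_mul _ _
      _ = (n : ℝ)⁻¹ * ((n : ℝ)⁻¹ * ∫ ω, (∑ i, ∑ j, ⟪ξf i ω, ξf j ω⟫) ∂μ) := by
          rw [integral_const_mul]
      _ = (n : ℝ)⁻¹ * ((n : ℝ)⁻¹ * ∑ i, ∑ j, ∫ ω, ⟪ξf i ω, ξf j ω⟫ ∂μ) := by
          rw [integral_finset_sum _ (fun i _ => integrable_finset_sum _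
              (fun j _ => integrable_inner_of_memL2 (hξfL2 i) (hξfL2 j)))]
          congr 2
          exact Finset.sum_congr rfl fun i _ => (integral_finset_sum _
            (fun j _ => integrable_inner_of_memL2 (hξfL2 i) (hξfL2 j)))
      _ ≤ (n : ℝ)⁻¹ * ((n : ℝ)⁻¹ * ((n : ℝ) * σ ^ 2)) := by
          refine mul_le_mul_of_nonneg_left (mul_le_mul_of_nonneg_left ?_ (by positivity))
            (by positivity)
          calc (∑ i, ∑ j, ∫ ω, ⟪ξf i ω, ξf j ω⟫ ∂μ)
              = ∑ i : Fin n, ∫ ω, ⟪ξf i ω, ξf i ω⟫ ∂μ :=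
                Finset.sum_congr rfl fun i _ => hdiag i
            _ ≤ ∑ i : Fin n, σ ^ 2 := Finset.sum_le_sum fun i _ => hii i
            _ = (n : ℝ) * σ ^ 2 := by
                rw [Finset.sum_const, Finset.card_univ, Fintype.card_fin, nsmul_eq_mul]
      _ = σ ^ 2 / n := by
          field_simp
  -- the drift term
  have hSsumInt : Integrable (fun ω => ∑ i, ‖x k i ω - xb ω‖ ^ 2) μ :=
    integrable_finset_sum _ (fun i _ =>
      (memLp_two_iff_integrable_sq_norm (((hx_L2 k i).sub hxbL2).aestronglyMeasurable)).mp
        ((hx_L2 k i).sub hxbL2))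
  have hmid_pt : ∀ ω, -(2*γ) * ⟪Av ω, Dv ω⟫ + γ ^ 2 * ‖Dv ω‖ ^ 2
      ≤ -γ * ((n : ℝ)⁻¹ * ∑ i, f i (xb ω) - (n : ℝ)⁻¹ * ∑ i, f i xstar)
        + 3 * L * γ / (2 * n) * ∑ i, ‖x k i ω - xb ω‖ ^ 2 := by
    intro ω
    have := key_bound hn f grad hL hγ0 hγL hdiff hsmooth hconv xstar hmin
      (fun i => x k i ω)
    simpa [hAv, hDv, hxb] using this
  have hIntRHS : Integrable (fun ω =>
      -γ * ((n : ℝ)⁻¹ * ∑ i, f i (xb ω) - (n : ℝ)⁻¹ * ∑ i, f i xstar)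
        + 3 * L * γ / (2 * n) * ∑ i, ‖x k i ω - xb ω‖ ^ 2) μ := by
    refine Integrable.add (Integrable.const_mul ?_ _) (hSsumInt.const_mul _)
    exact (hfint k).sub (integrable_const _)
  have hmid_le : (∫ ω, (-(2*γ) * ⟪Av ω, Dv ω⟫ + γ ^ 2 * ‖Dv ω‖ ^ 2) ∂μ)
      ≤ -γ * ((∫ ω, (n : ℝ)⁻¹ * ∑ i, f i (xb ω) ∂μ) - (n : ℝ)⁻¹ * ∑ i, f i xstar)
        + 3 * L * γ / (2 * n) * (∫ ω, (∑ i, ‖x k i ω - xb ω‖ ^ 2) ∂μ) := by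
    calc (∫ ω, (-(2*γ) * ⟪Av ω, Dv ω⟫ + γ ^ 2 * ‖Dv ω‖ ^ 2) ∂μ)
        ≤ ∫ ω, (-γ * ((n : ℝ)⁻¹ * ∑ i, f i (xb ω) - (n : ℝ)⁻¹ * ∑ i, f i xstar)
            + 3 * L * γ / (2 * n) * ∑ i, ‖x k i ω - xb ω‖ ^ 2) ∂μ :=
          integral_mono hIntmid hIntRHS hmid_pt
      _ = -γ * ((∫ ω, (n : ℝ)⁻¹ * ∑ i, f i (xb ω) ∂μ) - (n : ℝ)⁻¹ * ∑ i, f i xstar)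
            + 3 * L * γ / (2 * n) * (∫ ω, (∑ i, ‖x k i ω - xb ω‖ ^ 2) ∂μ) := by
          have e1 : (∫ ω, (-γ * ((n : ℝ)⁻¹ * ∑ i, f i (xb ω) - (n : ℝ)⁻¹ * ∑ i, f i xstar)
              + 3 * L * γ / (2 * n) * ∑ i, ‖x k i ω - xb ω‖ ^ 2) ∂μ)
              = (∫ ω, -γ * ((n : ℝ)⁻¹ * ∑ i, f i (xb ω) - (n : ℝ)⁻¹ * ∑ i, f i xstar) ∂μ)
                + ∫ ω, 3 * L * γ / (2 * n) * ∑ i, ‖x k i ω - xb ω‖ ^ 2 ∂μ :=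
            integral_add (((hfint k).sub (integrable_const _)).const_mul _)
              (hSsumInt.const_mul _)
          have e2 : (∫ ω, -γ * ((n : ℝ)⁻¹ * ∑ i, f i (xb ω) - (n : ℝ)⁻¹ * ∑ i, f i xstar) ∂μ)
              = -γ * ∫ ω, ((n : ℝ)⁻¹ * ∑ i, f i (xb ω) - (n : ℝ)⁻¹ * ∑ i, f i xstar) ∂μ :=
            integral_const_mul _ _
          have e3 : (∫ ω, 3 * L * γ / (2 * n) * ∑ i, ‖x k i ω - xb ω‖ ^ 2 ∂μ)
              = 3 * L * γ / (2 * n) * ∫ ω, (∑ i, ‖x k i ω - xb ω‖ ^ 2) ∂μ :=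
            integral_const_mul _ _
          have e4 : (∫ ω, ((n : ℝ)⁻¹ * ∑ i, f i (xb ω) - (n : ℝ)⁻¹ * ∑ i, f i xstar) ∂μ)
              = (∫ ω, (n : ℝ)⁻¹ * ∑ i, f i (xb ω) ∂μ)
                - ∫ ω, ((n : ℝ)⁻¹ * ∑ i, f i xstar : ℝ) ∂μ :=
            integral_sub (hfint k) (integrable_const _)
          rw [e1, e2, e3, e4, integral_const]
          simp [measure_univ]
  -- assemble everything
  have hnoise2 : γ ^ 2 * (∫ ω, ‖ξb ω‖ ^ 2 ∂μ) ≤ γ ^ 2 * (σ ^ 2 / n) :=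
    mul_le_mul_of_nonneg_left hnoise (sq_nonneg γ)
  have hcross0' : (∫ ω, (-(2*γ)) * ⟪Yv ω, ξb ω⟫ ∂μ) = 0 := by
    have h := integral_const_mul (μ := μ) (-(2*γ)) (fun ω => ⟪Yv ω, ξb ω⟫)
    rw [h, hcross0, mul_zero]
  have e1 : (∫ ω, ‖Av ω‖ ^ 2 ∂μ)
      = ∫ ω, ‖(n : ℝ)⁻¹ • (∑ i, x k i ω) - xstar‖ ^ 2 ∂μ := rfl
  have e2 : (∫ ω, (n : ℝ)⁻¹ * ∑ i, f i (xb ω) ∂μ)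
      = ∫ ω, (n : ℝ)⁻¹ * ∑ i, f i ((n : ℝ)⁻¹ • ∑ j, x k j ω) ∂μ := rfl
  have e3 : (∫ ω, (∑ i, ‖x k i ω - xb ω‖ ^ 2) ∂μ)
      = ∫ ω, (∑ i, ‖x k i ω - (n : ℝ)⁻¹ • ∑ j, x k j ω‖ ^ 2) ∂μ := rfl
  rw [hsplit, hcross0', ← e1, ← e2, ← e3]
  have hfinal : γ ^ 2 * (σ ^ 2 / n) = γ ^ 2 * σ ^ 2 / n := by ring
  linarith [hmid_le, hnoise2]
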